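/- Let K ⊂ ℂ be a compact set and ν a finite positive measure on ℂ whose support is compactly contained in a ball B of radius R containing K. Define the logarithmic potential u_ν(z) := ∫_ℂ log|z − ζ| dν(ζ). Then for every 0 < ε ≤ 1/2 and every w ∈ ℂ with |w| ≤ ε, one has ∫_K |u_ν(z − w) − u_ν(z)| dLeb(z) ≤ −C ν(B) ε log ε, where C > 0 depends only on K and R. -/

import Mathlib

open MeasureTheory
open scoped ENNReal

section Aux

open Set
open scoped ENNReal

private lemma abs_log_sub_log_le' {a b : ℝ} (ha : 0 < a) (hb : 0 < b) :
    |Real.log a - Real.log b| ≤ |a - b| * (a⁻¹ + b⁻¹) := by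
  wlog hab : a ≤ b generalizing a b
  · have := this hb ha (le_of_not_ge hab)
    rw [abs_sub_comm, abs_sub_comm b a] at this
    linarith [this]
  have h1 : Real.log b - Real.log a = Real.log (b / a) := (Real.log_div hb.ne' ha.ne').symm
  have h2 : Real.log (b / a) ≤ b / a - 1 := Real.log_le_sub_one_of_pos (by positivity)
  have h3 : b / a - 1 = (b - a) * a⁻¹ := by field_simp
  have h4 : |Real.log a - Real.log b| = Real.log b - Real.log a := by
    rw [abs_sub_comm,
      abs_of_nonneg (by linarith [Real.log_le_log ha hab] : 0 ≤ Real.log b - Real.log a)]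
  have h5 : |a - b| = b - a := by rw [abs_sub_comm, abs_of_nonneg (by linarith)]
  have hi : 0 ≤ (b - a) * b⁻¹ := mul_nonneg (by linarith) (by positivity)
  rw [h4, h5, h1]
  nlinarith [h2, h3]

private lemma abs_log_le_aux' {t M' : ℝ} (ht : 0 ≤ t) (htM : t ≤ M') (hM : 1 ≤ M') :
    |Real.log t| ≤ 2 * t ^ (-(1/2) : ℝ) + Real.log M' := by
  have hlogM : 0 ≤ Real.log M' := Real.log_nonneg hM
  rcases eq_or_lt_of_le ht with h0 | h0
  · simp [← h0]
    positivity
  rcases le_or_gt 1 t with h1 | h1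
  · rw [abs_of_nonneg (Real.log_nonneg h1)]
    have h2 : Real.log t ≤ Real.log M' := Real.log_le_log (by linarith) htM
    have h3 : (0:ℝ) ≤ 2 * t ^ (-(1/2) : ℝ) := by positivity
    linarith
  · rw [abs_of_nonpos (Real.log_nonpos ht h1.le)]
    have key : -Real.log t = 2 * Real.log (t ^ (-(1/2) : ℝ)) := by
      rw [Real.log_rpow h0]; ring
    have h2 : Real.log (t ^ (-(1/2) : ℝ)) ≤ t ^ (-(1/2) : ℝ) - 1 :=
      Real.log_le_sub_one_of_pos (by positivity)
    rw [key]
    linarith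

private lemma lintegral_abs_rpow_Ioo' {r : ℝ} (hr : r < 1) (M : ℝ) :
    ∫⁻ x in Ioo (-M) M, ENNReal.ofReal (|x| ^ (-r)) < ⊤ := by
  rcases le_or_gt M 0 with hM | hM
  · rw [Ioo_eq_empty (by linarith)]
    simp
  have h0 : ∫⁻ x in Ioo (0:ℝ) M, ENNReal.ofReal (|x| ^ (-r)) < ⊤ := by
    have hint : IntegrableOn (fun x : ℝ => |x| ^ (-r)) (Ioo 0 M) := by
      refine ((intervalIntegral.integrableOn_Ioo_rpow_iff hM).2
        (by linarith : (-1:ℝ) < -r)).congr_fun (fun x hx => ?_) measurableSet_Ioo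
      rw [abs_of_pos hx.1]
    exact hint.lintegral_lt_top
  have hneg : ∫⁻ x in Ioo (-M) (0:ℝ), ENNReal.ofReal (|x| ^ (-r))
      = ∫⁻ x in Ioo (0:ℝ) M, ENNReal.ofReal (|x| ^ (-r)) := by
    have hpre : (Neg.neg : ℝ → ℝ) ⁻¹' (Ioo (-M) 0) = Ioo 0 M := by
      ext x; simp [and_comm, neg_lt, lt_neg]
    calc ∫⁻ x in Ioo (-M) (0:ℝ), ENNReal.ofReal (|x| ^ (-r))
        = ∫⁻ x in (Neg.neg : ℝ → ℝ) ⁻¹' (Ioo (-M) 0), ENNReal.ofReal (|(-x)| ^ (-r)) :=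
          ((Measure.measurePreserving_neg (volume : Measure ℝ)).setLIntegral_comp_preimage_emb
            (MeasurableEquiv.neg ℝ).measurableEmbedding
            (fun x => ENNReal.ofReal (|x| ^ (-r))) (Ioo (-M) 0)).symm
      _ = ∫⁻ x in Ioo (0:ℝ) M, ENNReal.ofReal (|x| ^ (-r)) := by
          rw [hpre]; simp
  have hsub : Ioo (-M) M ⊆ Ioo (-M) 0 ∪ (Ioo 0 M ∪ {0}) := by
    intro x hx
    rcases lt_trichotomy x 0 with h | h | h
    · exact Or.inl ⟨hx.1, h⟩
    · exact Or.inr (Or.inr (by simp [h]))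
    · exact Or.inr (Or.inl ⟨h, hx.2⟩)
  calc ∫⁻ x in Ioo (-M) M, ENNReal.ofReal (|x| ^ (-r))
      ≤ ∫⁻ x in Ioo (-M) 0 ∪ (Ioo 0 M ∪ {0}), ENNReal.ofReal (|x| ^ (-r)) :=
        lintegral_mono_set hsub
    _ ≤ (∫⁻ x in Ioo (-M) 0, ENNReal.ofReal (|x| ^ (-r)))
        + ∫⁻ x in Ioo 0 M ∪ {0}, ENNReal.ofReal (|x| ^ (-r)) := lintegral_union_le _ _ _
    _ ≤ (∫⁻ x in Ioo (-M) 0, ENNReal.ofReal (|x| ^ (-r)))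
        + ((∫⁻ x in Ioo 0 M, ENNReal.ofReal (|x| ^ (-r)))
          + ∫⁻ x in ({0} : Set ℝ), ENNReal.ofReal (|x| ^ (-r))) := by
          gcongr
          exact lintegral_union_le _ _ _
    _ < ⊤ := by
        rw [hneg]
        have hz : ∫⁻ x in ({0} : Set ℝ), ENNReal.ofReal (|x| ^ (-r)) = 0 := by
          rw [Measure.restrict_eq_zero.2 (by simp)]; simp
        rw [hz]
        rw [add_zero]
        exact ENNReal.add_lt_top.2 ⟨h0, h0⟩

private lemma volume_re_eq_zero' : (volume : Measure ℂ) {z : ℂ | z.re = 0} = 0 := by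
  have h : {z : ℂ | z.re = 0} = Complex.measurableEquivRealProd ⁻¹' ({0} ×ˢ univ) := by
    ext z; simp [Complex.measurableEquivRealProd_apply, Set.mem_prod, eq_comm]
  rw [h, Complex.volume_preserving_equiv_real_prod.measure_preimage
    (((measurableSet_singleton 0).prod MeasurableSet.univ).nullMeasurableSet)]
  rw [Measure.volume_eq_prod, Measure.prod_prod]
  simp

private lemma volume_im_eq_zero' : (volume : Measure ℂ) {z : ℂ | z.im = 0} = 0 := by
  have h : {z : ℂ | z.im = 0} = Complex.measurableEquivRealProd ⁻¹' (univ ×ˢ {0}) := by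
    ext z; simp [Complex.measurableEquivRealProd_apply, Set.mem_prod, eq_comm]
  rw [h, Complex.volume_preserving_equiv_real_prod.measure_preimage
    ((MeasurableSet.univ.prod (measurableSet_singleton 0)).nullMeasurableSet)]
  rw [Measure.volume_eq_prod, Measure.prod_prod]
  simp

private lemma lintegral_abs_rpow_ball' {q : ℝ} (hq0 : 0 ≤ q) (hq2 : q < 2) (M : ℝ) :
    ∫⁻ z in Metric.ball (0:ℂ) M, ENNReal.ofReal (‖z‖ ^ (-q)) < ⊤ := by
  set r : ℝ := q / 2 with hrdef
  have hr1 : r < 1 := by rw [hrdef]; linarith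
  have hr0 : 0 ≤ r := by rw [hrdef]; linarith
  set S : Set ℂ := Complex.measurableEquivRealProd ⁻¹' (Ioo (-M) M ×ˢ Ioo (-M) M) with hS
  have hball : Metric.ball (0:ℂ) M ⊆ S := by
    intro z hz
    rw [Metric.mem_ball, dist_zero_right] at hz
    have hre := abs_lt.1 (lt_of_le_of_lt (Complex.abs_re_le_norm z) hz)
    have him := abs_lt.1 (lt_of_le_of_lt (Complex.abs_im_le_norm z) hz)
    simp only [hS, mem_preimage, Complex.measurableEquivRealProd_apply, mem_prod, mem_Ioo]
    exact ⟨hre, him⟩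
  have hpt : ∀ᵐ z ∂((volume : Measure ℂ).restrict S),
      ENNReal.ofReal (‖z‖ ^ (-q)) ≤
        ENNReal.ofReal (|z.re| ^ (-r)) * ENNReal.ofReal (|z.im| ^ (-r)) := by
    have hnull : (volume : Measure ℂ) {z : ℂ | z.re = 0 ∨ z.im = 0} = 0 :=
      measure_union_null volume_re_eq_zero' volume_im_eq_zero'
    have hae : ∀ᵐ z : ℂ, ¬(z.re = 0 ∨ z.im = 0) := by
      rw [ae_iff]
      simp only [not_not]
      exact hnull
    refine ae_restrict_of_ae ?_
    filter_upwards [hae] with z hz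
    push_neg at hz
    obtain ⟨hre, him⟩ := hz
    have hP : 0 < |z.re| * |z.im| := by positivity
    rw [← ENNReal.ofReal_mul (by positivity)]
    apply ENNReal.ofReal_le_ofReal
    rw [← Real.mul_rpow (abs_nonneg _) (abs_nonneg _)]
    have h1 : |z.re| * |z.im| ≤ ‖z‖ ^ (2:ℝ) := by
      rw [show ((2:ℝ)) = ((2:ℕ):ℝ) by norm_num, Real.rpow_natCast, Complex.sq_norm,
        Complex.normSq_apply]
      nlinarith [sq_nonneg (|z.re| - |z.im|), sq_abs z.re, sq_abs z.im]
    have h2 : ‖z‖ ^ (-q) = (‖z‖ ^ (2:ℝ)) ^ (-r) := by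
      rw [← Real.rpow_mul (norm_nonneg z)]
      congr 1
      rw [hrdef]; ring
    rw [h2]
    exact Real.rpow_le_rpow_of_nonpos hP h1 (by linarith)
  have h1d : ∫⁻ x in Ioo (-M) M, ENNReal.ofReal (|x| ^ (-r)) < ⊤ :=
    lintegral_abs_rpow_Ioo' hr1 M
  calc ∫⁻ z in Metric.ball (0:ℂ) M, ENNReal.ofReal (‖z‖ ^ (-q))
      ≤ ∫⁻ z in S, ENNReal.ofReal (‖z‖ ^ (-q)) := lintegral_mono_set hball
    _ ≤ ∫⁻ z in S, ENNReal.ofReal (|z.re| ^ (-r)) * ENNReal.ofReal (|z.im| ^ (-r)) :=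
        lintegral_mono_ae hpt
    _ = ∫⁻ p in Ioo (-M) M ×ˢ Ioo (-M) M,
          ENNReal.ofReal (|p.1| ^ (-r)) * ENNReal.ofReal (|p.2| ^ (-r)) :=
        Complex.volume_preserving_equiv_real_prod.setLIntegral_comp_preimage_emb
          Complex.measurableEquivRealProd.measurableEmbedding
          (fun p => ENNReal.ofReal (|p.1| ^ (-r)) * ENNReal.ofReal (|p.2| ^ (-r))) _
    _ = (∫⁻ x in Ioo (-M) M, ENNReal.ofReal (|x| ^ (-r)))
        * ∫⁻ x in Ioo (-M) M, ENNReal.ofReal (|x| ^ (-r)) := by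
        rw [Measure.volume_eq_prod, ← Measure.prod_restrict]
        exact lintegral_prod_mul
          ((measurable_abs.pow_const _).ennreal_ofReal).aemeasurable
          ((measurable_abs.pow_const _).ennreal_ofReal).aemeasurable
    _ < ⊤ := ENNReal.mul_lt_top h1d h1d

private lemma translate_lintegral_le' (g : ℂ → ℝ≥0∞) {c a : ℂ} {R : ℝ}
    (ha : ‖a - c‖ ≤ R + 1) :
    ∫⁻ z in Metric.ball c R, g (z - a) ≤ ∫⁻ u in Metric.ball (0:ℂ) (2*R+1), g u := by
  have hpre : (fun z : ℂ => z - a) ⁻¹' Metric.ball (c - a) R = Metric.ball c R := by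
    ext z
    simp only [mem_preimage, Metric.mem_ball]
    rw [dist_sub_right]
  have h1 : ∫⁻ z in Metric.ball c R, g (z - a) = ∫⁻ u in Metric.ball (c - a) R, g u := by
    rw [← hpre]
    exact (measurePreserving_sub_right volume a).setLIntegral_comp_preimage_emb
      (MeasurableEquiv.subRight a).measurableEmbedding g (Metric.ball (c - a) R)
  rw [h1]
  apply lintegral_mono_set
  intro u hu
  rw [Metric.mem_ball] at hu ⊢
  rw [dist_zero_right]
  calc ‖u‖ ≤ ‖u - (c - a)‖ + ‖c - a‖ := by
        simpa using norm_add_le (u - (c - a)) (c - a)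
    _ < R + (R + 1) := by
        rw [Complex.dist_eq] at hu
        have h2 : ‖c - a‖ ≤ R + 1 := by rwa [← norm_neg, neg_sub] at ha
        have h0 : (0:ℝ) ≤ R + 1 := le_trans (norm_nonneg _) h2
        linarith
    _ = 2*R + 1 := by ring

end Aux

/-- The logarithmic potential `u_ν(z) = ∫ log|z − ζ| dν(ζ)` of a finite positive
compactly supported measure `ν` on `ℂ`. -/
noncomputable def logPotential (ν : Measure ℂ) (z : ℂ) : ℝ :=
  ∫ ζ, Real.log ‖z - ζ‖ ∂ν

/-- **Step 1 of Lemma 2.2**: let `K ⊂ ℂ` be compact and `ν` a finite positive measure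
whose support is compactly contained in a ball `B` of radius `R` containing `K`.
Then for every `0 < ε ≤ 1/2` and every `w ∈ ℂ` with `|w| ≤ ε`,
`∫_K |u_ν(z − w) − u_ν(z)| dLeb(z) ≤ −C ν(B) ε log ε`, where `C > 0` depends only
on `K` and `R`. -/
theorem logPotential_translate_estimate (K : Set ℂ) (hK : IsCompact K) (R : ℝ) (hR : 0 < R) :
    ∃ C : ℝ, 0 < C ∧
      ∀ (c : ℂ) (ν : Measure ℂ), IsFiniteMeasure ν →
        K ⊆ Metric.ball c R →
        (∃ K' : Set ℂ, IsCompact K' ∧ K' ⊆ Metric.ball c R ∧ ν K'ᶜ = 0) →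
        ∀ ε : ℝ, 0 < ε → ε ≤ 1 / 2 →
          ∀ w : ℂ, ‖w‖ ≤ ε →
            (∫ z in K, |logPotential ν (z - w) - logPotential ν z|) ≤
              C * (ν (Metric.ball c R)).toReal * (ε * (-Real.log ε)) := by
  classical
  have hlog2 : 0 < Real.log 2 := Real.log_pos (by norm_num)
  set M : ℝ := 2 * R + 1 with hMdef
  have hM1 : (1:ℝ) ≤ M := by rw [hMdef]; linarith
  have habs : Measurable (fun z : ℂ => ‖z‖) := continuous_norm.measurable
  set I1 : ℝ≥0∞ := ∫⁻ u in Metric.ball (0:ℂ) M, ENNReal.ofReal (‖u‖)⁻¹ with hI1def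
  set I2 : ℝ≥0∞ := ∫⁻ u in Metric.ball (0:ℂ) M, ENNReal.ofReal (‖u‖ ^ (-(1/2):ℝ))
    with hI2def
  have hI1top : I1 < ⊤ := by
    have h := lintegral_abs_rpow_ball' (q := 1) (by norm_num) (by norm_num) M
    rw [hI1def]
    simp only [Real.rpow_neg_one] at h
    exact h
  have hI2top : I2 < ⊤ := by
    have h := lintegral_abs_rpow_ball' (q := 1/2) (by norm_num) (by norm_num) M
    rw [hI2def]
    convert h using 4 <;> norm_num
  set Cc : ℝ := 2 * I1.toReal / Real.log 2 + 1 with hCcdef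
  have hCcpos : 0 < Cc := by
    have h0 : 0 ≤ 2 * I1.toReal / Real.log 2 := by positivity
    rw [hCcdef]; linarith
  refine ⟨Cc, hCcpos, ?_⟩
  intro c ν hνfin hKB hsupp ε hε0 hε12 w hw
  haveI := hνfin
  obtain ⟨K', hK'cpt, hK'B, hνK'⟩ := hsupp
  set B := Metric.ball c R with hBdef
  have hνBc : ν Bᶜ = 0 := measure_mono_null (Set.compl_subset_compl.2 hK'B) hνK'
  have haeν : ∀ᵐ ζ ∂ν, ζ ∈ B := by
    rw [ae_iff]
    exact hνBc
  have hνuniv : ν Set.univ = ν B := by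
    have h := measure_add_measure_compl (μ := ν) (measurableSet_ball : MeasurableSet B)
    rw [hνBc, add_zero] at h
    exact h.symm
  have hmeas_v : ∀ v : ℂ, Measurable fun p : ℂ × ℂ => Real.log (‖p.1 - v - p.2‖) :=
    fun v => Real.measurable_log.comp (habs.comp
      ((measurable_fst.sub measurable_const).sub measurable_snd))
  -- Step 1: a.e. integrability of the potential integrand
  have step1 : ∀ v : ℂ, ‖v‖ ≤ 1 →
      ∀ᵐ z ∂(volume.restrict K), Integrable (fun ζ => Real.log (‖z - v - ζ‖)) ν := by
    intro v hv
    set F : ℂ → ℂ → ℝ≥0∞ :=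
      fun z ζ => ENNReal.ofReal |Real.log (‖z - v - ζ‖)| with hFdef
    have hFm : Measurable (Function.uncurry F) := ((hmeas_v v).abs).ennreal_ofReal
    have hbound : ∀ᵐ ζ ∂ν, (∫⁻ z in K, F z ζ)
        ≤ 2 * I2 + ENNReal.ofReal (Real.log M) * volume K := by
      filter_upwards [haeν] with ζ hζ
      have hζ' : ‖ζ - c‖ < R := by
        rwa [hBdef, Metric.mem_ball, Complex.dist_eq] at hζ
      have hpt : ∀ z ∈ K, F z ζ ≤
          ENNReal.ofReal (2 * (‖z - v - ζ‖) ^ (-(1/2):ℝ))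
            + ENNReal.ofReal (Real.log M) := by
        intro z hz
        have hzc : ‖z - c‖ < R := by
          have h := hKB hz
          rwa [Metric.mem_ball, Complex.dist_eq] at h
        have htM : ‖z - v - ζ‖ ≤ M := by
          have he : z - v - ζ = (z - c) + ((c - ζ) + -v) := by ring
          rw [he]
          have t1 := norm_add_le (z - c) ((c - ζ) + -v)
          have t2 := norm_add_le (c - ζ) (-v)
          have t3 : ‖c - ζ‖ = ‖ζ - c‖ := by
            rw [show c - ζ = -(ζ - c) by ring, norm_neg]
          have t4 : ‖-v‖ = ‖v‖ := norm_neg v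
          rw [hMdef]
          rw [t3, t4] at t2
          linarith
        have h := abs_log_le_aux' (norm_nonneg _) htM hM1
        calc F z ζ = ENNReal.ofReal |Real.log (‖z - v - ζ‖)| := rfl
          _ ≤ ENNReal.ofReal (2 * (‖z - v - ζ‖) ^ (-(1/2):ℝ) + Real.log M) :=
              ENNReal.ofReal_le_ofReal h
          _ = _ := ENNReal.ofReal_add (by positivity) (Real.log_nonneg hM1)
      calc (∫⁻ z in K, F z ζ)
          ≤ ∫⁻ z in K, (ENNReal.ofReal (2 * (‖z - v - ζ‖) ^ (-(1/2):ℝ))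
              + ENNReal.ofReal (Real.log M)) :=
            lintegral_mono_ae ((ae_restrict_mem hK.measurableSet).mono fun z hz => hpt z hz)
        _ = (∫⁻ z in K, ENNReal.ofReal (2 * (‖z - v - ζ‖) ^ (-(1/2):ℝ)))
              + ENNReal.ofReal (Real.log M) * volume K := by
            rw [lintegral_add_right _ measurable_const, setLIntegral_const]
        _ ≤ 2 * I2 + ENNReal.ofReal (Real.log M) * volume K := by
            gcongr
            calc (∫⁻ z in K, ENNReal.ofReal (2 * (‖z - v - ζ‖) ^ (-(1/2):ℝ)))
                ≤ ∫⁻ z in B, ENNReal.ofReal (2 * (‖z - v - ζ‖) ^ (-(1/2):ℝ)) :=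
                  lintegral_mono_set hKB
              _ = ∫⁻ z in B,
                    (fun u => ENNReal.ofReal (2 * (‖u‖) ^ (-(1/2):ℝ))) (z - (v + ζ)) := by
                  apply lintegral_congr
                  intro z
                  rw [sub_sub]
              _ ≤ ∫⁻ u in Metric.ball (0:ℂ) (2*R+1),
                    ENNReal.ofReal (2 * (‖u‖) ^ (-(1/2):ℝ)) := by
                  apply translate_lintegral_le'
                  have he : v + ζ - c = v + (ζ - c) := by ring
                  rw [he]
                  calc ‖v + (ζ - c)‖
                      ≤ ‖v‖ + ‖ζ - c‖ := norm_add_le _ _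
                    _ ≤ R + 1 := by linarith
              _ = 2 * I2 := by
                  rw [hI2def, ← hMdef]
                  simp_rw [ENNReal.ofReal_mul (by norm_num : (0:ℝ) ≤ 2)]
                  rw [lintegral_const_mul _ ((habs.pow_const _).ennreal_ofReal)]
                  norm_num
    have hswap := lintegral_lintegral_swap (μ := volume.restrict K) (ν := ν) hFm.aemeasurable
    have htot : (∫⁻ z in K, ∫⁻ ζ, F z ζ ∂ν) < ⊤ := by
      rw [hswap]
      calc (∫⁻ ζ, ∫⁻ z in K, F z ζ ∂volume ∂ν)
          ≤ ∫⁻ _ζ, (2 * I2 + ENNReal.ofReal (Real.log M) * volume K) ∂ν :=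
            lintegral_mono_ae hbound
        _ = (2 * I2 + ENNReal.ofReal (Real.log M) * volume K) * ν Set.univ := lintegral_const _
        _ < ⊤ := by
            refine ENNReal.mul_lt_top (ENNReal.add_lt_top.2 ⟨?_, ?_⟩) (measure_lt_top ν _)
            · exact ENNReal.mul_lt_top (by simp) hI2top
            · exact ENNReal.mul_lt_top ENNReal.ofReal_lt_top hK.measure_lt_top
    have hae := ae_lt_top (hFm.lintegral_prod_right') htot.ne
    filter_upwards [hae] with z hz
    refine ⟨(Real.measurable_log.comp
      (habs.comp (measurable_const.sub measurable_id))).aestronglyMeasurable, ?_⟩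
    rw [hasFiniteIntegral_iff_norm]
    simpa [Real.norm_eq_abs] using hz
  -- apply step 1
  have hw1 : ‖w‖ ≤ 1 := le_trans hw (by linarith)
  have hP1 := step1 w hw1
  have hP0 : ∀ᵐ z ∂(volume.restrict K),
      Integrable (fun ζ => Real.log (‖z - ζ‖)) ν := by
    filter_upwards [step1 0 (by simp)] with z h
    simpa using h
  -- strong measurability of the potential difference
  have hsm : StronglyMeasurable fun z : ℂ => logPotential ν (z - w) - logPotential ν z := by
    have h1 : StronglyMeasurable fun z : ℂ => logPotential ν (z - w) := by
      have h := MeasureTheory.StronglyMeasurable.integral_prod_right' (ν := ν)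
        ((hmeas_v w).stronglyMeasurable)
      exact h
    have h0 : StronglyMeasurable (logPotential ν) := by
      have h := MeasureTheory.StronglyMeasurable.integral_prod_right' (ν := ν)
        ((hmeas_v 0).stronglyMeasurable)
      simp only [sub_zero] at h
      exact h
    exact h1.sub h0
  have hAm : AEStronglyMeasurable
      (fun z : ℂ => |logPotential ν (z - w) - logPotential ν z|) (volume.restrict K) :=
    (hsm.measurable.abs).aestronglyMeasurable
  rw [integral_eq_lintegral_of_nonneg_ae (Filter.Eventually.of_forall fun z => abs_nonneg _) hAm]
  have hlogε : Real.log ε ≤ -Real.log 2 := by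
    have h1 : Real.log ε ≤ Real.log (1/2) := Real.log_le_log hε0 hε12
    rwa [show (1:ℝ)/2 = 2⁻¹ by norm_num, Real.log_inv] at h1
  have hNε : 0 ≤ -Real.log ε := by linarith
  apply ENNReal.toReal_le_of_le_ofReal
    (mul_nonneg (mul_nonneg hCcpos.le ENNReal.toReal_nonneg) (mul_nonneg hε0.le hNε))
  set G : ℂ → ℂ → ℝ≥0∞ := fun z ζ =>
    ENNReal.ofReal |Real.log (‖z - w - ζ‖) - Real.log (‖z - ζ‖)|
    with hGdef
  have hGm : Measurable (Function.uncurry G) := by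
    have h0 : Measurable fun p : ℂ × ℂ => Real.log (‖p.1 - p.2‖) := by
      have := hmeas_v 0
      simpa using this
    exact (((hmeas_v w).sub h0).abs).ennreal_ofReal
  -- pointwise bound by the inner lintegral
  have hpoint : ∀ᵐ z ∂(volume.restrict K),
      ENNReal.ofReal |logPotential ν (z - w) - logPotential ν z| ≤ ∫⁻ ζ, G z ζ ∂ν := by
    filter_upwards [hP1, hP0] with z h1 h0
    have he : logPotential ν (z - w) - logPotential ν z
        = ∫ ζ, (Real.log (‖z - w - ζ‖) - Real.log (‖z - ζ‖)) ∂ν :=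
      (integral_sub h1 h0).symm
    rw [he]
    have hmz : AEStronglyMeasurable
        (fun ζ => |Real.log (‖z - w - ζ‖) - Real.log (‖z - ζ‖)|) ν :=
      (((Real.measurable_log.comp (habs.comp (measurable_const.sub measurable_id))).sub
        (Real.measurable_log.comp (habs.comp
          (measurable_const.sub measurable_id)))).abs).aestronglyMeasurable
    have habsint : |∫ ζ, (Real.log (‖z - w - ζ‖) - Real.log (‖z - ζ‖)) ∂ν|
        ≤ ∫ ζ, |Real.log (‖z - w - ζ‖) - Real.log (‖z - ζ‖)| ∂ν := by
      have hni := norm_integral_le_integral_norm (μ := ν)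
        (f := fun ζ => Real.log (‖z - w - ζ‖) - Real.log (‖z - ζ‖))
      simpa [Real.norm_eq_abs] using hni
    have heq : (∫ ζ, |Real.log (‖z - w - ζ‖) - Real.log (‖z - ζ‖)| ∂ν)
        = (∫⁻ ζ, G z ζ ∂ν).toReal := integral_eq_lintegral_of_nonneg_ae
          (Filter.Eventually.of_forall fun ζ => abs_nonneg _) hmz
    calc ENNReal.ofReal
          |∫ ζ, (Real.log (‖z - w - ζ‖) - Real.log (‖z - ζ‖)) ∂ν|
        ≤ ENNReal.ofReal
            (∫ ζ, |Real.log (‖z - w - ζ‖) - Real.log (‖z - ζ‖)| ∂ν) :=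
          ENNReal.ofReal_le_ofReal habsint
      _ = ENNReal.ofReal ((∫⁻ ζ, G z ζ ∂ν).toReal) := by rw [heq]
      _ ≤ ∫⁻ ζ, G z ζ ∂ν := ENNReal.ofReal_toReal_le
  -- the inner bound, for a.e. ζ
  have hinner : ∀ᵐ ζ ∂ν, (∫⁻ z in K, G z ζ) ≤ ENNReal.ofReal ε * (2 * I1) := by
    filter_upwards [haeν] with ζ hζ
    have hζ' : ‖ζ - c‖ < R := by
      rwa [hBdef, Metric.mem_ball, Complex.dist_eq] at hζ
    have hz1 : ∀ᵐ z ∂(volume.restrict K), z ≠ ζ := by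
      refine ae_restrict_of_ae ?_
      have hset : {z : ℂ | ¬ z ≠ ζ} = {ζ} := by ext; simp
      rw [ae_iff, hset]
      exact measure_singleton ζ
    have hz2 : ∀ᵐ z ∂(volume.restrict K), z ≠ ζ + w := by
      refine ae_restrict_of_ae ?_
      have hset : {z : ℂ | ¬ z ≠ ζ + w} = {ζ + w} := by ext; simp
      rw [ae_iff, hset]
      exact measure_singleton _
    have hpt : ∀ᵐ z ∂(volume.restrict K), G z ζ ≤
        ENNReal.ofReal (ε * (‖z - ζ‖)⁻¹)
          + ENNReal.ofReal (ε * (‖z - w - ζ‖)⁻¹) := by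
      filter_upwards [hz1, hz2] with z hza hzb
      have ha : 0 < ‖z - w - ζ‖ := by
        apply norm_pos_iff.mpr
        intro h
        apply hzb
        have h2 : z - (w + ζ) = 0 := by rw [← sub_sub]; exact h
        have h3 := sub_eq_zero.1 h2
        rw [h3, add_comm]
      have hb : 0 < ‖z - ζ‖ := norm_pos_iff.mpr (sub_ne_zero.2 hza)
      have hab : |‖z - w - ζ‖ - ‖z - ζ‖| ≤ ε := by
        calc |‖z - w - ζ‖ - ‖z - ζ‖|
            ≤ ‖(z - w - ζ) - (z - ζ)‖ :=
              abs_norm_sub_norm_le _ _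
          _ = ‖-w‖ := by congr 1; ring
          _ ≤ ε := by rw [norm_neg]; exact hw
      have hlog := abs_log_sub_log_le' ha hb
      have hkey : |Real.log (‖z - w - ζ‖) - Real.log (‖z - ζ‖)|
          ≤ ε * (‖z - ζ‖)⁻¹ + ε * (‖z - w - ζ‖)⁻¹ := by
        have h2 : |‖z - w - ζ‖ - ‖z - ζ‖|
              * ((‖z - w - ζ‖)⁻¹ + (‖z - ζ‖)⁻¹)
            ≤ ε * ((‖z - w - ζ‖)⁻¹ + (‖z - ζ‖)⁻¹) :=
          mul_le_mul_of_nonneg_right hab (by positivity)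
        calc |Real.log (‖z - w - ζ‖) - Real.log (‖z - ζ‖)|
            ≤ |‖z - w - ζ‖ - ‖z - ζ‖|
              * ((‖z - w - ζ‖)⁻¹ + (‖z - ζ‖)⁻¹) := hlog
          _ ≤ ε * ((‖z - w - ζ‖)⁻¹ + (‖z - ζ‖)⁻¹) := h2
          _ = ε * (‖z - ζ‖)⁻¹ + ε * (‖z - w - ζ‖)⁻¹ := by ring
      calc G z ζ ≤ ENNReal.ofReal (ε * (‖z - ζ‖)⁻¹
            + ε * (‖z - w - ζ‖)⁻¹) := ENNReal.ofReal_le_ofReal hkey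
        _ = _ := ENNReal.ofReal_add (by positivity) (by positivity)
    have hterm1 : (∫⁻ z in B, ENNReal.ofReal (ε * (‖z - ζ‖)⁻¹))
        ≤ ENNReal.ofReal ε * I1 := by
      have h := translate_lintegral_le' (fun u => ENNReal.ofReal (ε * (‖u‖)⁻¹))
        (c := c) (a := ζ) (R := R) (by linarith)
      calc (∫⁻ z in B, ENNReal.ofReal (ε * (‖z - ζ‖)⁻¹))
          ≤ ∫⁻ u in Metric.ball (0:ℂ) (2*R+1), ENNReal.ofReal (ε * (‖u‖)⁻¹) := h
        _ = ENNReal.ofReal ε * I1 := by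
            rw [hI1def, ← hMdef]
            simp_rw [ENNReal.ofReal_mul hε0.le]
            rw [lintegral_const_mul _ ((show Measurable fun u : ℂ => ‖u‖⁻¹ from habs.inv).ennreal_ofReal)]
    have hterm2 : (∫⁻ z in B, ENNReal.ofReal (ε * (‖z - w - ζ‖)⁻¹))
        ≤ ENNReal.ofReal ε * I1 := by
      have hsub2 : ∀ z : ℂ, z - w - ζ = z - (w + ζ) := fun z => sub_sub z w ζ
      have h := translate_lintegral_le' (fun u => ENNReal.ofReal (ε * (‖u‖)⁻¹))
        (c := c) (a := w + ζ) (R := R) (by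
          have he : w + ζ - c = w + (ζ - c) := by ring
          rw [he]
          calc ‖w + (ζ - c)‖
              ≤ ‖w‖ + ‖ζ - c‖ := norm_add_le _ _
            _ ≤ R + 1 := by linarith)
      calc (∫⁻ z in B, ENNReal.ofReal (ε * (‖z - w - ζ‖)⁻¹))
          = ∫⁻ z in B, (fun u => ENNReal.ofReal (ε * (‖u‖)⁻¹)) (z - (w + ζ)) := by
            apply lintegral_congr
            intro z
            rw [hsub2 z]
        _ ≤ ∫⁻ u in Metric.ball (0:ℂ) (2*R+1), ENNReal.ofReal (ε * (‖u‖)⁻¹) := h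
        _ = ENNReal.ofReal ε * I1 := by
            rw [hI1def, ← hMdef]
            simp_rw [ENNReal.ofReal_mul hε0.le]
            rw [lintegral_const_mul _ ((show Measurable fun u : ℂ => ‖u‖⁻¹ from habs.inv).ennreal_ofReal)]
    calc (∫⁻ z in K, G z ζ)
        ≤ ∫⁻ z in K, (ENNReal.ofReal (ε * (‖z - ζ‖)⁻¹)
            + ENNReal.ofReal (ε * (‖z - w - ζ‖)⁻¹)) := lintegral_mono_ae hpt
      _ ≤ ∫⁻ z in B, (ENNReal.ofReal (ε * (‖z - ζ‖)⁻¹)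
            + ENNReal.ofReal (ε * (‖z - w - ζ‖)⁻¹)) := lintegral_mono_set hKB
      _ = (∫⁻ z in B, ENNReal.ofReal (ε * (‖z - ζ‖)⁻¹))
            + ∫⁻ z in B, ENNReal.ofReal (ε * (‖z - w - ζ‖)⁻¹) := by
          apply lintegral_add_left
          exact (measurable_const.mul ((habs.comp (measurable_id.sub measurable_const)).inv)).ennreal_ofReal
      _ ≤ ENNReal.ofReal ε * I1 + ENNReal.ofReal ε * I1 := add_le_add hterm1 hterm2
      _ = ENNReal.ofReal ε * (2 * I1) := by ring
  -- put everything together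
  have hfinal : ENNReal.ofReal ε * (2 * I1) * ν B
      ≤ ENNReal.ofReal (Cc * (ν B).toReal * (ε * -Real.log ε)) := by
    have hI1e : I1 = ENNReal.ofReal I1.toReal := (ENNReal.ofReal_toReal hI1top.ne).symm
    have hνBe : ν B = ENNReal.ofReal (ν B).toReal := (ENNReal.ofReal_toReal (measure_ne_top ν B)).symm
    conv_lhs => rw [hI1e, hνBe, show ((2:ℝ≥0∞)) = ENNReal.ofReal (2:ℝ) by simp,
      ← ENNReal.ofReal_mul (by norm_num : (0:ℝ) ≤ 2), ← ENNReal.ofReal_mul hε0.le,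
      ← ENNReal.ofReal_mul (by positivity)]
    apply ENNReal.ofReal_le_ofReal
    set T := I1.toReal with hT
    set V := (ν B).toReal with hV
    have hT0 : 0 ≤ T := ENNReal.toReal_nonneg
    have hV0 : 0 ≤ V := ENNReal.toReal_nonneg
    have hTL : 2 * T / Real.log 2 * Real.log 2 = 2 * T := div_mul_cancel₀ _ hlog2.ne'
    have hN : Real.log 2 ≤ -Real.log ε := by linarith
    have h2TL : 0 ≤ 2 * T / Real.log 2 := by positivity
    have hCN : 2 * T ≤ Cc * (-Real.log ε) := by
      have hmm : Cc * Real.log 2 ≤ Cc * (-Real.log ε) :=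
        mul_le_mul_of_nonneg_left hN hCcpos.le
      have hexp : Cc * Real.log 2 = 2 * T + Real.log 2 := by
        rw [hCcdef]
        field_simp
      linarith
    calc ε * (2 * T) * V ≤ ε * (Cc * (-Real.log ε)) * V :=
          mul_le_mul_of_nonneg_right (mul_le_mul_of_nonneg_left hCN hε0.le) hV0
      _ = Cc * V * (ε * -Real.log ε) := by ring
  calc (∫⁻ z in K, ENNReal.ofReal |logPotential ν (z - w) - logPotential ν z|)
      ≤ ∫⁻ z in K, (∫⁻ ζ, G z ζ ∂ν) := lintegral_mono_ae hpoint
    _ = ∫⁻ ζ, (∫⁻ z in K, G z ζ) ∂ν :=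
        lintegral_lintegral_swap (μ := volume.restrict K) (ν := ν) hGm.aemeasurable
    _ ≤ ∫⁻ _ζ, (ENNReal.ofReal ε * (2 * I1)) ∂ν := lintegral_mono_ae hinner
    _ = ENNReal.ofReal ε * (2 * I1) * ν Set.univ := lintegral_const _
    _ = ENNReal.ofReal ε * (2 * I1) * ν B := by rw [hνuniv]
    _ ≤ ENNReal.ofReal (Cc * (ν B).toReal * (ε * -Real.log ε)) := hfinal
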